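/- gcd(f_n(s,t), f_m(s,t)) = f_{gcd(n,m)}(s,t) as polynomials in Z[s,t], for all positive integers m, n. -/

import Mathlib

open MvPolynomial

/-- Generalized Fibonacci polynomials in ℤ[s,t]: X 0 plays the role of s, X 1 of t. -/
noncomputable def fibPoly : ℕ → MvPolynomial (Fin 2) ℤ
  | 0 => 0
  | 1 => 1
  | n + 2 => X 0 * fibPoly (n + 1) + X 1 * fibPoly n

lemma fibPoly_add (m n : ℕ) :
    fibPoly (m + n + 1) =
      fibPoly (m + 1) * fibPoly (n + 1) + X 1 * (fibPoly m * fibPoly n) := by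
  induction m using Nat.twoStepInduction generalizing n with
  | zero => simp [fibPoly]
  | one =>
    rw [show 1 + n + 1 = n + 2 from by ring,
      show fibPoly (n + 2) = X 0 * fibPoly (n + 1) + X 1 * fibPoly n from rfl,
      show fibPoly (1 + 1) = X 0 * fibPoly 1 + X 1 * fibPoly 0 from rfl]
    simp [fibPoly]
  | more m ih1 ih2 =>
    have e1 : fibPoly (m + 2 + n + 1)
        = X 0 * fibPoly (m + 1 + n + 1) + X 1 * fibPoly (m + n + 1) := by
      rw [show m + 2 + n + 1 = (m + n + 1) + 2 from by ring]
      rw [show fibPoly ((m + n + 1) + 2)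
        = X 0 * fibPoly (m + n + 1 + 1) + X 1 * fibPoly (m + n + 1) from rfl]
      rw [show m + n + 1 + 1 = m + 1 + n + 1 from by ring]
    rw [e1, ih2 n, ih1 n,
      show fibPoly (m + 2 + 1) = X 0 * fibPoly (m + 1 + 1) + X 1 * fibPoly (m + 1) from rfl,
      show fibPoly (m + 1 + 1) = X 0 * fibPoly (m + 1) + X 1 * fibPoly m from rfl]
    ring

lemma fibPoly_dvd_mul (m k : ℕ) : fibPoly m ∣ fibPoly (k * m) := by
  induction k with
  | zero => simp [fibPoly]
  | succ k ih =>
    rcases Nat.eq_zero_or_pos (k * m) with h | h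
    · rw [Nat.succ_mul, h, Nat.zero_add]
    · obtain ⟨a, ha⟩ : ∃ a, k * m = a + 1 := ⟨k * m - 1, (Nat.succ_pred_eq_of_pos h).symm⟩
      rcases Nat.eq_zero_or_pos m with hm | hm
      · simp [hm, fibPoly]
      · obtain ⟨b, hb⟩ : ∃ b, m = b + 1 := ⟨m - 1, (Nat.succ_pred_eq_of_pos hm).symm⟩
        have hsm : (k + 1) * m = k * m + m := Nat.succ_mul k m
        have h2 : (k + 1) * m = (a + 1) + b + 1 := by omega
        rw [ha] at ih
        rw [h2, fibPoly_add, hb]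
        rw [hb] at ih
        exact dvd_add (dvd_mul_left _ _) ((ih.mul_right _).mul_left _)

lemma prime_X1 : Prime (X 1 : MvPolynomial (Fin 2) ℤ) := by
  have h0 : Prime (X 0 : MvPolynomial (Fin 2) ℤ) := by
    rw [← MulEquiv.prime_iff (finSuccEquiv ℤ 1).toMulEquiv]
    show Prime ((finSuccEquiv ℤ 1) (X 0))
    rw [finSuccEquiv_X_zero]
    exact Polynomial.prime_X
  rw [← MulEquiv.prime_iff (renameEquiv ℤ (Equiv.swap (0 : Fin 2) 1)).toMulEquiv]
  show Prime ((renameEquiv ℤ (Equiv.swap (0 : Fin 2) 1)) (X 1))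
  rw [renameEquiv_apply, rename_X]
  simpa using h0

lemma fibPoly_mod_X1 (n : ℕ) : ∃ g, fibPoly (n + 1) = X 0 ^ n + X 1 * g := by
  induction n using Nat.twoStepInduction with
  | zero => exact ⟨0, by simp [fibPoly]⟩
  | one => exact ⟨0, by simp [fibPoly]⟩
  | more n _ ih2 =>
    obtain ⟨g, hg⟩ := ih2
    refine ⟨X 0 * g + fibPoly (n + 1), ?_⟩
    rw [show fibPoly (n + 2 + 1) = X 0 * fibPoly (n + 1 + 1) + X 1 * fibPoly (n + 1) from rfl,
      hg]
    ring

lemma isRelPrime_fib_X1 (n : ℕ) : IsRelPrime (fibPoly (n + 1)) (X 1) := by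
  obtain ⟨g, hg⟩ := fibPoly_mod_X1 n
  intro d h1 h2
  have hdx : d ∣ X 0 ^ n := by
    have e : (X 0 : MvPolynomial (Fin 2) ℤ) ^ n = fibPoly (n + 1) - X 1 * g := by
      rw [hg]; ring
    rw [e]
    exact dvd_sub h1 (h2.mul_right g)
  rcases h2 with ⟨c, hc⟩
  rcases prime_X1.irreducible.isUnit_or_isUnit hc with hu | hu
  · exact hu
  · exfalso
    have hX1d : (X 1 : MvPolynomial (Fin 2) ℤ) ∣ d := by
      obtain ⟨u, rfl⟩ := hu
      exact ⟨(u⁻¹ : _ˣ), by rw [hc]; simp [mul_assoc]⟩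
    have hX10 : (X 1 : MvPolynomial (Fin 2) ℤ) ∣ X 0 :=
      prime_X1.dvd_of_dvd_pow (hX1d.trans hdx)
    have := (eval (fun i : Fin 2 => if i = 0 then (1 : ℤ) else 0)).map_dvd hX10
    simp at this

lemma isRelPrime_fib_succ (n : ℕ) : IsRelPrime (fibPoly (n + 1)) (fibPoly n) := by
  induction n with
  | zero => exact fun d h1 _ => isUnit_of_dvd_one (by simpa [fibPoly] using h1)
  | succ n ih =>
    intro d h1 h2
    have hd : d ∣ X 1 * fibPoly n := by
      have e : X 1 * fibPoly n = fibPoly (n + 2) - X 0 * fibPoly (n + 1) := by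
        rw [show fibPoly (n + 2) = X 0 * fibPoly (n + 1) + X 1 * fibPoly n from rfl]; ring
      rw [e]
      exact dvd_sub h1 (h2.mul_left (X 0))
    obtain ⟨d1, d2, hdt, hdf, rfl⟩ := exists_dvd_and_dvd_of_dvd_mul hd
    have hu2 : IsUnit d2 := ih ((Dvd.intro_left d1 rfl).trans h2) hdf
    have hdX1 : d1 * d2 ∣ X 1 :=
      ((mul_dvd_mul_left d1 (isUnit_iff_dvd_one.mp hu2)).trans (by simp)).trans hdt
    exact isRelPrime_fib_X1 (n + 1) h1 hdX1

lemma dvd_fibPoly_gcd (m n : ℕ) : ∀ d : MvPolynomial (Fin 2) ℤ,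
    d ∣ fibPoly m → d ∣ fibPoly n → d ∣ fibPoly (Nat.gcd m n) := by
  induction m, n using Nat.gcd.induction with
  | H0 n => intro d _ h2; simpa using h2
  | H1 m n hm ih =>
    intro d h1 h2
    rw [Nat.gcd_rec]
    refine ih d ?_ h1
    -- show d ∣ fibPoly (n % m)
    rcases Nat.eq_zero_or_pos (n / m) with hq0 | hq0
    · have hlt : n < m := by
        by_contra hcon
        push_neg at hcon
        have := Nat.div_pos hcon hm
        omega
      rwa [Nat.mod_eq_of_lt hlt]
    · have hqm : 0 < (n / m) * m := Nat.mul_pos hq0 hm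
      obtain ⟨a, ha⟩ : ∃ a, (n / m) * m = a + 1 :=
        ⟨(n / m) * m - 1, (Nat.succ_pred_eq_of_pos hqm).symm⟩
      have hdm := Nat.div_add_mod n m
      have hcomm : m * (n / m) = (n / m) * m := Nat.mul_comm m (n / m)
      have hn : n = a + (n % m) + 1 := by omega
      have hfn : fibPoly n = fibPoly (a + 1) * fibPoly (n % m + 1)
          + X 1 * (fibPoly a * fibPoly (n % m)) := by
        have h := fibPoly_add a (n % m)
        rwa [← hn] at h
      have hdvd_a1 : d ∣ fibPoly (a + 1) := by
        rw [← ha]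
        exact h1.trans (fibPoly_dvd_mul m (n / m))
      have hd : d ∣ fibPoly (n % m) * (X 1 * fibPoly a) := by
        have e : fibPoly (n % m) * (X 1 * fibPoly a)
            = fibPoly n - fibPoly (a + 1) * fibPoly (n % m + 1) := by
          rw [hfn]; ring
        rw [e]
        exact dvd_sub h2 (hdvd_a1.mul_right _)
      have hrel : IsRelPrime d (X 1 * fibPoly a) :=
        IsRelPrime.mul_right ((isRelPrime_fib_X1 a).of_dvd_left hdvd_a1)
          ((isRelPrime_fib_succ a).of_dvd_left hdvd_a1)
      exact hrel.dvd_of_dvd_mul_right hd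

/-- gcd(f_n, f_m) = f_{gcd(n,m)} in ℤ[s,t]: f_{gcd(n,m)} is a greatest common divisor. -/
theorem fibPoly_gcd (m n : ℕ) (hm : 0 < m) (hn : 0 < n) :
    fibPoly (Nat.gcd n m) ∣ fibPoly n ∧ fibPoly (Nat.gcd n m) ∣ fibPoly m ∧
      ∀ d : MvPolynomial (Fin 2) ℤ, d ∣ fibPoly n → d ∣ fibPoly m →
        d ∣ fibPoly (Nat.gcd n m) := by
  refine ⟨?_, ?_, fun d h1 h2 => dvd_fibPoly_gcd n m d h1 h2⟩
  · obtain ⟨k, hk⟩ := Nat.gcd_dvd_left n m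
    have := fibPoly_dvd_mul (Nat.gcd n m) k
    rwa [Nat.mul_comm, ← hk] at this
  · obtain ⟨k, hk⟩ := Nat.gcd_dvd_right n m
    have := fibPoly_dvd_mul (Nat.gcd n m) k
    rwa [Nat.mul_comm, ← hk] at this
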